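/- Let γ ∈ (0, 1). There exists θ₀ ∈ (π/2, π) such that for every θ ∈ (π/2, θ₀) there is a constant c > 0, independent of τ and z, with the property: for every time step τ > 0 and every z ∈ D(τ,θ) one has |δ_τ(e^{−zτ})^{3−γ} (ρ₂(e^{−zτ})/2) τ³ − z^{−γ}| ≤ c τ³ |z|^{3−γ}, where δ_τ is the BDF3 generating symbol and ρ₂(ξ) = ξ(1+ξ)/(1−ξ)³. -/

import Mathlib

open Complex Set

/-- The BDF3 generating symbol `δ_τ(ξ) = τ⁻¹(11/6 − 3ξ + (3/2)ξ² − (1/3)ξ³)`. -/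
noncomputable def bdf3 (τ : ℝ) (ξ : ℂ) : ℂ :=
  (τ : ℂ)⁻¹ * (11 / 6 - 3 * ξ + (3 / 2) * ξ ^ 2 - (1 / 3) * ξ ^ 3)

/-- The region `D(τ,θ)`: nonzero `z` with either `|arg z| = θ` and `|Im z| ≤ π/τ`,
or `|z| ≤ 1/τ` and `|arg z| ≤ θ`. -/
def Dset (τ θ : ℝ) : Set ℂ :=
  {z : ℂ | z ≠ 0 ∧
    ((|z.arg| = θ ∧ |z.im| ≤ Real.pi / τ) ∨ (‖z‖ ≤ 1 / τ ∧ |z.arg| ≤ θ))}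

/-- Closed form of the generating function `Σ_{n≥1} n² ξⁿ`. -/
noncomputable def rho2 (ξ : ℂ) : ℂ := ξ * (1 + ξ) / (1 - ξ) ^ 3

noncomputable def gsym (ξ : ℂ) : ℂ := 11 / 6 - 3 * ξ + (3 / 2) * ξ ^ 2 - (1 / 3) * ξ ^ 3

lemma exp_taylor2 {x : ℂ} (hx : ‖x‖ ≤ 1) :
    ‖(Complex.exp x - (1 + x))‖ ≤ ‖x‖ ^ 2 := by
  have h := Complex.exp_bound hx (n := 2) (by norm_num)
  simp only [Finset.sum_range_succ, Finset.sum_range_zero] at h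
  norm_num [Nat.factorial] at h
  exact le_trans h (by nlinarith [pow_nonneg (norm_nonneg x) 2])

lemma exp_taylor4 {x : ℂ} (hx : ‖x‖ ≤ 1) :
    ‖(Complex.exp x - (1 + x + x ^ 2 / 2 + x ^ 3 / 6))‖ ≤ ‖x‖ ^ 4 := by
  have h := Complex.exp_bound hx (n := 4) (by norm_num)
  simp only [Finset.sum_range_succ, Finset.sum_range_zero] at h
  norm_num [Nat.factorial] at h
  exact le_trans h (by nlinarith [pow_nonneg (norm_nonneg x) 4])

lemma exp_taylor5 {x : ℂ} (hx : ‖x‖ ≤ 1) :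
    ‖(Complex.exp x - (1 + x + x ^ 2 / 2 + x ^ 3 / 6 + x ^ 4 / 24))‖ ≤ ‖x‖ ^ 5 := by
  have h := Complex.exp_bound hx (n := 5) (by norm_num)
  simp only [Finset.sum_range_succ, Finset.sum_range_zero] at h
  norm_num [Nat.factorial] at h
  exact le_trans h (by nlinarith [pow_nonneg (norm_nonneg x) 5])

lemma exp_taylor7 {x : ℂ} (hx : ‖x‖ ≤ 1) :
    ‖(Complex.exp x - (1 + x + x ^ 2 / 2 + x ^ 3 / 6 + x ^ 4 / 24 + x ^ 5 / 120 + x ^ 6 / 720))‖ ≤ ‖x‖ ^ 7 := by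
  have h := Complex.exp_bound hx (n := 7) (by norm_num)
  simp only [Finset.sum_range_succ, Finset.sum_range_zero] at h
  norm_num [Nat.factorial] at h
  exact le_trans h (by nlinarith [pow_nonneg (norm_nonneg x) 7])

lemma exp_sq (w : ℂ) : Complex.exp w ^ 2 = Complex.exp (2 * w) := by
  rw [show ((2:ℂ)*w) = ((2:ℕ):ℂ)*w by norm_num, Complex.exp_nat_mul]

lemma exp_cube (w : ℂ) : Complex.exp w ^ 3 = Complex.exp (3 * w) := by
  rw [show ((3:ℂ)*w) = ((3:ℕ):ℂ)*w by norm_num, Complex.exp_nat_mul]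

lemma abs_add₄ (a b c d : ℂ) : ‖(a + b + c + d)‖ ≤
    ‖a‖ + ‖b‖ + ‖c‖ + ‖d‖ := by
  refine le_trans (norm_add_le _ _) ?_
  refine add_le_add ?_ le_rfl
  refine le_trans (norm_add_le _ _) ?_
  exact add_le_add (norm_add_le _ _) le_rfl

lemma abs_add₆ (a b c d e f : ℂ) : ‖(a + b + c + d + e + f)‖ ≤
    ‖a‖ + ‖b‖ + ‖c‖ + ‖d‖ + ‖e‖
    + ‖f‖ := by
  refine le_trans (norm_add_le _ _) ?_
  refine add_le_add ?_ le_rfl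
  refine le_trans (norm_add_le _ _) ?_
  exact add_le_add (abs_add₄ a b c d) le_rfl

/-- Third-order consistency of the BDF3 symbol: `g(e^{-w}) = w + O(w⁴)`. -/
lemma M_bound {w : ℂ} (hw : ‖w‖ ≤ 1 / 3) :
    ‖(gsym (Complex.exp (-w)) - w)‖ ≤ 45 * ‖w‖ ^ 4 := by
  have h0 := norm_nonneg w
  have h1 : ‖(-w)‖ ≤ 1 := by rw [norm_neg]; linarith
  have h2 : ‖(2 * -w)‖ ≤ 1 := by
    rw [norm_mul, norm_neg]; simp; linarith
  have h3 : ‖(3 * -w)‖ ≤ 1 := by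
    rw [norm_mul, norm_neg]; simp; linarith
  have e1 := exp_taylor5 h1
  have e2 := exp_taylor5 h2
  have e3 := exp_taylor5 h3
  rw [← exp_sq] at e2
  rw [← exp_cube] at e3
  set a := Complex.exp (-w) with ha
  set q1 : ℂ := 1 + (-w) + (-w) ^ 2 / 2 + (-w) ^ 3 / 6 + (-w) ^ 4 / 24 with hq1
  set q2 : ℂ := 1 + (2 * -w) + (2 * -w) ^ 2 / 2 + (2 * -w) ^ 3 / 6 + (2 * -w) ^ 4 / 24 with hq2
  set q3 : ℂ := 1 + (3 * -w) + (3 * -w) ^ 2 / 2 + (3 * -w) ^ 3 / 6 + (3 * -w) ^ 4 / 24 with hq3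
  have hb1 : ‖(a - q1)‖ ≤ ‖w‖ ^ 5 := by
    simpa [norm_neg] using e1
  have hb2 : ‖(a ^ 2 - q2)‖ ≤ 32 * ‖w‖ ^ 5 := by
    refine le_trans e2 ?_
    rw [norm_mul, norm_neg, mul_pow]; norm_num
  have hb3 : ‖(a ^ 3 - q3)‖ ≤ 243 * ‖w‖ ^ 5 := by
    refine le_trans e3 ?_
    rw [norm_mul, norm_neg, mul_pow]; norm_num
  have key : gsym a - w =
      (-3) * (a - q1) + (3/2) * (a ^ 2 - q2) + (-(1/3)) * (a ^ 3 - q3) + (-(w ^ 4 / 4)) := by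
    simp only [gsym, hq1, hq2, hq3]; ring
  have habs := abs_add₄ ((-3) * (a - q1)) ((3/2) * (a ^ 2 - q2)) ((-(1/3)) * (a ^ 3 - q3))
      (-(w ^ 4 / 4))
  rw [← key] at habs
  have m1 : ‖((-3 : ℂ) * (a - q1))‖ = 3 * ‖(a - q1)‖ := by simp
  have m2 : ‖((3/2 : ℂ) * (a ^ 2 - q2))‖ = 3/2 * ‖(a ^ 2 - q2)‖ := by simp
  have m3 : ‖((-(1/3) : ℂ) * (a ^ 3 - q3))‖ = 1/3 * ‖(a ^ 3 - q3)‖ := by simp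
  have m4 : ‖(-(w ^ 4 / 4))‖ = ‖w‖ ^ 4 / 4 := by simp
  rw [m1, m2, m3, m4] at habs
  have h5 : ‖w‖ ^ 5 ≤ (1/3) * ‖w‖ ^ 4 := by
    calc ‖w‖ ^ 5 = ‖w‖ * ‖w‖ ^ 4 := by ring
      _ ≤ (1/3) * ‖w‖ ^ 4 := by gcongr
  nlinarith [pow_nonneg h0 4]

lemma abs_add₅ (a b c d e : ℂ) : ‖(a + b + c + d + e)‖ ≤
    ‖a‖ + ‖b‖ + ‖c‖ + ‖d‖ + ‖e‖ := by
  refine le_trans (norm_add_le _ _) ?_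
  exact add_le_add (abs_add₄ a b c d) le_rfl

/-- Sixth-order vanishing of `w³(e⁻ʷ + e⁻²ʷ) − 2(1−e⁻ʷ)³` at `w = 0`. -/
lemma N_bound {w : ℂ} (hw : ‖w‖ ≤ 1 / 3) :
    ‖(w ^ 3 * (Complex.exp (-w) + Complex.exp (-w) ^ 2)
      - 2 * (1 - Complex.exp (-w)) ^ 3)‖ ≤ 2000 * ‖w‖ ^ 6 := by
  have h0 := norm_nonneg w
  have h1 : ‖(-w)‖ ≤ 1 := by rw [norm_neg]; linarith
  have h2 : ‖(2 * -w)‖ ≤ 1 := by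
    rw [norm_mul, norm_neg]; simp; linarith
  have h3 : ‖(3 * -w)‖ ≤ 1 := by
    rw [norm_mul, norm_neg]; simp; linarith
  have e1 := exp_taylor4 h1
  have e2 := exp_taylor4 h2
  have f1 := exp_taylor7 h1
  have f2 := exp_taylor7 h2
  have f3 := exp_taylor7 h3
  rw [← exp_sq] at e2 f2
  rw [← exp_cube] at f3
  set a := Complex.exp (-w) with ha
  set p1 : ℂ := 1 + (-w) + (-w) ^ 2 / 2 + (-w) ^ 3 / 6 with hp1
  set p2 : ℂ := 1 + (2 * -w) + (2 * -w) ^ 2 / 2 + (2 * -w) ^ 3 / 6 with hp2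
  set s1 : ℂ := 1 + (-w) + (-w) ^ 2 / 2 + (-w) ^ 3 / 6 + (-w) ^ 4 / 24 + (-w) ^ 5 / 120
      + (-w) ^ 6 / 720 with hs1
  set s2 : ℂ := 1 + (2 * -w) + (2 * -w) ^ 2 / 2 + (2 * -w) ^ 3 / 6 + (2 * -w) ^ 4 / 24
      + (2 * -w) ^ 5 / 120 + (2 * -w) ^ 6 / 720 with hs2
  set s3 : ℂ := 1 + (3 * -w) + (3 * -w) ^ 2 / 2 + (3 * -w) ^ 3 / 6 + (3 * -w) ^ 4 / 24
      + (3 * -w) ^ 5 / 120 + (3 * -w) ^ 6 / 720 with hs3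
  have hb1 : ‖(a - p1)‖ ≤ ‖w‖ ^ 4 := by
    simpa [norm_neg] using e1
  have hb2 : ‖(a ^ 2 - p2)‖ ≤ 16 * ‖w‖ ^ 4 := by
    refine le_trans e2 ?_; rw [norm_mul, norm_neg, mul_pow]; norm_num
  have hc1 : ‖(a - s1)‖ ≤ ‖w‖ ^ 7 := by
    simpa [norm_neg] using f1
  have hc2 : ‖(a ^ 2 - s2)‖ ≤ 128 * ‖w‖ ^ 7 := by
    refine le_trans f2 ?_; rw [norm_mul, norm_neg, mul_pow]; norm_num
  have hc3 : ‖(a ^ 3 - s3)‖ ≤ 2187 * ‖w‖ ^ 7 := by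
    refine le_trans f3 ?_; rw [norm_mul, norm_neg, mul_pow]; norm_num
  have key : w ^ 3 * (a + a ^ 2) - 2 * (1 - a) ^ 3 =
      w ^ 3 * (a - p1) + w ^ 3 * (a ^ 2 - p2) + 6 * (a - s1) + (-6) * (a ^ 2 - s2)
      + 2 * (a ^ 3 - s3) := by
    simp only [hp1, hp2, hs1, hs2, hs3]; ring
  have habs := abs_add₅ (w ^ 3 * (a - p1)) (w ^ 3 * (a ^ 2 - p2)) (6 * (a - s1))
      ((-6) * (a ^ 2 - s2)) (2 * (a ^ 3 - s3))
  rw [← key] at habs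
  have m1 : ‖(w ^ 3 * (a - p1))‖ = ‖w‖ ^ 3 * ‖(a - p1)‖ := by
    rw [norm_mul, norm_pow]
  have m2 : ‖(w ^ 3 * (a ^ 2 - p2))‖ = ‖w‖ ^ 3 * ‖(a ^ 2 - p2)‖ := by
    rw [norm_mul, norm_pow]
  have m3 : ‖((6 : ℂ) * (a - s1))‖ = 6 * ‖(a - s1)‖ := by simp
  have m4 : ‖((-6 : ℂ) * (a ^ 2 - s2))‖ = 6 * ‖(a ^ 2 - s2)‖ := by simp
  have m5 : ‖((2 : ℂ) * (a ^ 3 - s3))‖ = 2 * ‖(a ^ 3 - s3)‖ := by simp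
  rw [m1, m2, m3, m4, m5] at habs
  have h7 : ‖w‖ ^ 7 ≤ (1/3) * ‖w‖ ^ 6 := by
    calc ‖w‖ ^ 7 = ‖w‖ * ‖w‖ ^ 6 := by ring
      _ ≤ (1/3) * ‖w‖ ^ 6 := by gcongr
  have h34 : ‖w‖ ^ 3 * ‖w‖ ^ 4 = ‖w‖ ^ 7 := by ring
  nlinarith [pow_nonneg h0 6, pow_nonneg h0 3, pow_nonneg h0 4,
    mul_le_mul_of_nonneg_left hb1 (pow_nonneg h0 3),
    mul_le_mul_of_nonneg_left hb2 (pow_nonneg h0 3)]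

/-- Lower bound `|1 − e⁻ʷ| ≥ |w|/2` for small `w`. -/
lemma one_sub_exp_lb {w : ℂ} (hw : ‖w‖ ≤ 1 / 3) :
    ‖w‖ / 2 ≤ ‖(1 - Complex.exp (-w))‖ := by
  have h0 := norm_nonneg w
  have h1 : ‖(-w)‖ ≤ 1 := by rw [norm_neg]; linarith
  have e1 : ‖(Complex.exp (-w) - (1 + -w))‖ ≤ ‖w‖ ^ 2 := by
    have h := Complex.exp_bound h1 (n := 2) (by norm_num)
    simp only [Finset.sum_range_succ, Finset.sum_range_zero] at h
    norm_num [Nat.factorial] at h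
    refine le_trans h ?_
    nlinarith [pow_nonneg h0 2]
  have key : (1 : ℂ) - Complex.exp (-w) = w - (Complex.exp (-w) - (1 + -w)) := by ring
  have htri : ‖w‖ - ‖(Complex.exp (-w) - (1 + -w))‖ ≤
      ‖(1 - Complex.exp (-w))‖ := by
    rw [key]
    have h4 := norm_add_le (w - (Complex.exp (-w) - (1 + -w))) (Complex.exp (-w) - (1 + -w))
    simp only [sub_add_cancel] at h4
    linarith
  have h2 : ‖w‖ ^ 2 ≤ (1/3) * ‖w‖ := by nlinarith
  linarith

/-- `|Log A| ≤ 2|A−1|` on the disc `|A−1| ≤ 1/2`. -/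
lemma log_bound {A : ℂ} (hA : ‖(A - 1)‖ ≤ 1/2) :
    ‖(Complex.log A)‖ ≤ 2 * ‖(A - 1)‖ := by
  have hre : ∀ u : ℂ, u ∈ Metric.closedBall (1:ℂ) (1/2) → (1:ℝ)/2 ≤ u.re := by
    intro u hu
    rw [Metric.mem_closedBall, Complex.dist_eq] at hu
    have := Complex.abs_re_le_norm (u - 1)
    simp only [Complex.sub_re, Complex.one_re] at this
    have := abs_le.mp (le_trans this hu)
    linarith [this.1]
  have key := Convex.norm_image_sub_le_of_norm_hasDerivWithin_le
    (f := Complex.log) (f' := fun u => u⁻¹) (s := Metric.closedBall (1:ℂ) (1/2)) (C := 2)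
    (fun u hu => (Complex.hasDerivAt_log (Or.inl (by linarith [hre u hu]))).hasDerivWithinAt)
    (fun u hu => by
      rw [norm_inv]
      have h1 : (1:ℝ)/2 ≤ ‖u‖ := le_trans (hre u hu) (by
        calc u.re ≤ |u.re| := le_abs_self _
          _ ≤ ‖u‖ := Complex.abs_re_le_norm u)
      rw [inv_le_comm₀ (by linarith) (by norm_num)]
      · linarith)
    (convex_closedBall _ _)
    (Metric.mem_closedBall_self (by norm_num))
    (by rw [Metric.mem_closedBall, Complex.dist_eq]; exact hA)
  rw [Complex.log_one, sub_zero] at key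
  simpa using key

lemma arg_small {A : ℂ} (hA : ‖(A - 1)‖ ≤ 1/20) : |A.arg| ≤ Real.pi/3 := by
  have him : |A.im| ≤ 1/20 := by
    have h := Complex.abs_im_le_norm (A - 1)
    simp only [Complex.sub_im, Complex.one_im, sub_zero] at h
    linarith [le_trans h hA]
  have hre : (19:ℝ)/20 ≤ A.re := by
    have h := Complex.abs_re_le_norm (A - 1)
    simp only [Complex.sub_re, Complex.one_re] at h
    have := abs_le.mp (le_trans h hA)
    linarith [this.1]
  have habs : (19:ℝ)/20 ≤ ‖A‖ :=
    le_trans hre (le_trans (le_abs_self _) (Complex.abs_re_le_norm A))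
  rw [Complex.arg_of_re_nonneg (by linarith)]
  have hratio : |A.im / ‖A‖| ≤ 1/2 := by
    rw [abs_div, _root_.abs_of_nonneg (norm_nonneg A)]
    rw [div_le_iff₀ (by linarith)]
    linarith
  have h1 : Real.arcsin (A.im / ‖A‖) ≤ Real.pi/3 := by
    rw [Real.arcsin_le_iff_le_sin ⟨by linarith [abs_le.mp hratio |>.1], by
        linarith [abs_le.mp hratio |>.2]⟩
      ⟨by linarith [Real.pi_pos], by linarith [Real.pi_pos]⟩]
    rw [Real.sin_pi_div_three]
    have : (1:ℝ) ≤ Real.sqrt 3 := by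
      rw [show (1:ℝ) = Real.sqrt 1 by simp]
      exact Real.sqrt_le_sqrt (by norm_num)
    linarith [abs_le.mp hratio |>.2]
  have h2 : -(Real.pi/3) ≤ Real.arcsin (A.im / ‖A‖) := by
    have h3 : Real.arcsin (-(A.im / ‖A‖)) ≤ Real.pi/3 := by
      rw [Real.arcsin_le_iff_le_sin ⟨by linarith [abs_le.mp hratio |>.1, abs_le.mp hratio |>.2], by
          linarith [abs_le.mp hratio |>.1, abs_le.mp hratio |>.2]⟩
        ⟨by linarith [Real.pi_pos], by linarith [Real.pi_pos]⟩]
      rw [Real.sin_pi_div_three]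
      have : (1:ℝ) ≤ Real.sqrt 3 := by
        rw [show (1:ℝ) = Real.sqrt 1 by simp]
        exact Real.sqrt_le_sqrt (by norm_num)
      linarith [abs_le.mp hratio |>.1, abs_le.mp hratio |>.2]
    rw [Real.arcsin_neg] at h3
    linarith
  rw [abs_le]
  exact ⟨h2, h1⟩

/-- Near-zero estimate. -/
lemma near_bound {γ : ℝ} (hγ0 : 0 < γ) (hγ1 : γ < 1) {θ : ℝ} (hθ : θ ≤ 7 * Real.pi / 12)
    {w : ℂ} (hw0 : w ≠ 0) (hwr : ‖w‖ ≤ 1/10) (hargw : |w.arg| ≤ θ) :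
    ‖(gsym (Complex.exp (-w)) ^ (((3 - γ : ℝ)) : ℂ) * (rho2 (Complex.exp (-w)) / 2)
      - w ^ (-(γ : ℂ)))‖ ≤ 20000 * ‖w‖ ^ (3 - γ) := by
  have habsw : 0 < ‖w‖ := norm_pos_iff.mpr hw0
  have hr3 : ‖w‖ ≤ 1/3 := by linarith
  set s : ℂ := (((3 - γ : ℝ)) : ℂ) with hs
  set a := Complex.exp (-w) with ha
  set A := gsym a / w with hA
  -- |A - 1| bounds
  have hA1 : ‖(A - 1)‖ ≤ 45 * ‖w‖ ^ 3 := by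
    have : A - 1 = (gsym a - w) / w := by
      rw [hA]; field_simp
    rw [this, norm_div]
    rw [div_le_iff₀ habsw]
    calc ‖(gsym a - w)‖ ≤ 45 * ‖w‖ ^ 4 := M_bound hr3
      _ = 45 * ‖w‖ ^ 3 * ‖w‖ := by ring
  have hw3 : ‖w‖ ^ 3 ≤ 1/1000 := by
    calc ‖w‖ ^ 3 ≤ (1/10 : ℝ) ^ 3 := by
          exact pow_le_pow_left₀ habsw.le hwr 3
      _ = 1/1000 := by norm_num
  have hA20 : ‖(A - 1)‖ ≤ 1/20 := by linarith
  have hA0 : A ≠ 0 := by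
    intro h
    rw [h] at hA20
    simp at hA20
    norm_num at hA20
  have hgsym_eq : gsym a = w * A := by
    rw [hA]; field_simp
  have hgsym0 : gsym a ≠ 0 := by
    rw [hgsym_eq]; exact mul_ne_zero hw0 hA0
  -- splitting of the power
  have hargA : |A.arg| ≤ Real.pi/3 := arg_small hA20
  have hargsum : w.arg + A.arg ∈ Set.Ioc (-Real.pi) Real.pi := by
    have hw1 := abs_le.mp hargw
    have hA1' := abs_le.mp hargA
    have hpi := Real.pi_pos
    constructor
    · nlinarith [hw1.1, hA1'.1]
    · nlinarith [hw1.2, hA1'.2]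
  have hlog : Complex.log (gsym a) = Complex.log w + Complex.log A := by
    rw [hgsym_eq]; exact Complex.log_mul hw0 hA0 hargsum
  have hsplit : gsym a ^ s = w ^ s * A ^ s := by
    rw [Complex.cpow_def_of_ne_zero hgsym0, Complex.cpow_def_of_ne_zero hw0,
      Complex.cpow_def_of_ne_zero hA0, hlog, add_mul, Complex.exp_add]
  -- B bounds
  set B := w ^ 3 * (rho2 a / 2) with hB
  have hden0 : (1 : ℂ) - a ≠ 0 := by
    intro h
    have := one_sub_exp_lb hr3
    rw [← ha, h] at this
    simp at this
    linarith
  have hBm1 : ‖(B - 1)‖ ≤ 8000 * ‖w‖ ^ 3 := by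
    have hid : B - 1 = (w ^ 3 * (a + a ^ 2) - 2 * (1 - a) ^ 3) / (2 * (1 - a) ^ 3) := by
      rw [hB, rho2]
      field_simp
    rw [hid, norm_div]
    have hd : ‖(2 * (1 - a) ^ 3)‖ = 2 * ‖(1 - a)‖ ^ 3 := by
      rw [norm_mul, norm_pow]; norm_num
    rw [hd]
    have hlb := one_sub_exp_lb hr3
    rw [← ha] at hlb
    have hlb3 : (‖w‖ / 2) ^ 3 ≤ ‖(1 - a)‖ ^ 3 := by
      gcongr
    have hd0 : (0:ℝ) < 2 * (‖w‖ / 2) ^ 3 := by positivity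
    calc ‖(w ^ 3 * (a + a ^ 2) - 2 * (1 - a) ^ 3)‖ / (2 * ‖(1 - a)‖ ^ 3)
        ≤ (2000 * ‖w‖ ^ 6) / (2 * (‖w‖ / 2) ^ 3) := by
          refine div_le_div₀ (by positivity) (N_bound hr3) hd0 ?_
          linarith [hlb3]
      _ = 8000 * ‖w‖ ^ 3 := by
          field_simp
          ring
  have hBle : ‖B‖ ≤ 9 := by
    have : ‖B‖ ≤ ‖(B - 1)‖ + 1 := by
      have := norm_add_le (B - 1) 1
      simpa using this
    have h8 : 8000 * ‖w‖ ^ 3 ≤ 8 := by linarith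
    linarith
  -- A^s - 1 bound
  have habs_s : ‖s‖ ≤ 3 := by
    rw [hs, Complex.norm_real, Real.norm_eq_abs]
    rw [abs_le]; constructor <;> linarith
  have hlogA : ‖(Complex.log A)‖ ≤ 90 * ‖w‖ ^ 3 := by
    have := log_bound (le_trans hA20 (by norm_num))
    linarith
  have hAs1 : ‖(A ^ s - 1)‖ ≤ 540 * ‖w‖ ^ 3 := by
    rw [Complex.cpow_def_of_ne_zero hA0]
    have hv : ‖(Complex.log A * s)‖ ≤ 270 * ‖w‖ ^ 3 := by
      rw [norm_mul]
      calc ‖(Complex.log A)‖ * ‖s‖ ≤ (90 * ‖w‖ ^ 3) * 3 := by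
            gcongr
        _ = 270 * ‖w‖ ^ 3 := by ring
    have hv1 : ‖(Complex.log A * s)‖ ≤ 1 := by linarith
    have := Complex.norm_exp_sub_one_le hv1
    linarith
  -- assembling
  have h3c : s = (3 : ℂ) + (-(γ : ℂ)) := by
    rw [hs]; push_cast; ring
  have hw_s : w ^ s = w ^ (3:ℕ) * w ^ (-(γ:ℂ)) := by
    rw [h3c, Complex.cpow_add _ _ hw0]
    congr 1
    rw [show ((3:ℂ)) = ((3:ℕ):ℂ) by norm_num, Complex.cpow_natCast]
  have hprod : gsym a ^ s * (rho2 a / 2) - w ^ (-(γ:ℂ)) = w ^ (-(γ:ℂ)) * (A ^ s * B - 1) := by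
    rw [hsplit, hw_s, hB]
    ring
  rw [hprod, norm_mul]
  have habsWg : ‖(w ^ (-(γ:ℂ)))‖ = ‖w‖ ^ (-γ) := by
    rw [Complex.norm_cpow_of_ne_zero hw0]
    simp
  have hAB1 : ‖(A ^ s * B - 1)‖ ≤ 20000 * ‖w‖ ^ 3 := by
    have hid : A ^ s * B - 1 = (A ^ s - 1) * B + (B - 1) := by ring
    rw [hid]
    refine le_trans (norm_add_le _ _) ?_
    rw [norm_mul]
    have h1 : ‖(A ^ s - 1)‖ * ‖B‖ ≤ (540 * ‖w‖ ^ 3) * 9 := by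
      gcongr
    linarith [pow_nonneg habsw.le 3]
  rw [habsWg]
  calc ‖w‖ ^ (-γ) * ‖(A ^ s * B - 1)‖
      ≤ ‖w‖ ^ (-γ) * (20000 * ‖w‖ ^ 3) := by
        gcongr
    _ = 20000 * (‖w‖ ^ (-γ) * ‖w‖ ^ ((3:ℕ):ℝ)) := by
        rw [Real.rpow_natCast]
        ring
    _ = 20000 * ‖w‖ ^ (3 - γ) := by
        rw [← Real.rpow_add habsw]
        congr 2
        push_cast
        ring

/-- The compact "far" region. -/
def Kset : Set ℂ :=
  {u : ℂ | 1/10 ≤ ‖u‖ ∧ ‖u‖ ≤ 6 ∧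
    ‖u‖ * Real.cos (7 * Real.pi / 12) ≤ u.re}

lemma Kset_closed : IsClosed Kset := by
  have h1 : IsClosed {u : ℂ | 1/10 ≤ ‖u‖} :=
    isClosed_le continuous_const continuous_norm
  have h2 : IsClosed {u : ℂ | ‖u‖ ≤ 6} :=
    isClosed_le continuous_norm continuous_const
  have h3 : IsClosed {u : ℂ | ‖u‖ * Real.cos (7 * Real.pi / 12) ≤ u.re} :=
    isClosed_le (continuous_norm.mul continuous_const) Complex.continuous_re
  have : Kset = {u : ℂ | 1/10 ≤ ‖u‖} ∩ ({u : ℂ | ‖u‖ ≤ 6} ∩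
      {u : ℂ | ‖u‖ * Real.cos (7 * Real.pi / 12) ≤ u.re}) := by
    ext u; simp [Kset, Set.mem_setOf_eq, and_assoc]
  rw [this]
  exact h1.inter (h2.inter h3)

lemma Kset_compact : IsCompact Kset := by
  refine (isCompact_closedBall (0:ℂ) 6).of_isClosed_subset Kset_closed ?_
  intro u hu
  rw [Metric.mem_closedBall, Complex.dist_eq, sub_zero]
  exact hu.2.1

lemma Kset_ne_zero {u : ℂ} (hu : u ∈ Kset) : u ≠ 0 := by
  intro h
  have := hu.1
  rw [h] at this
  simp at this
  norm_num at this

lemma Kset_exp_ne_one {u : ℂ} (hu : u ∈ Kset) : (1:ℂ) - Complex.exp (-u) ≠ 0 := by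
  intro h
  have hexp : Complex.exp (-u) = 1 := by
    have := sub_eq_zero.mp h
    exact this.symm
  rw [Complex.exp_eq_one_iff] at hexp
  obtain ⟨n, hn⟩ := hexp
  have hu_eq : u = -(n * (2 * Real.pi * I)) := by
    rw [← hn]; ring
  have habs : ‖u‖ = |(n:ℝ)| * (2 * Real.pi) := by
    rw [hu_eq, norm_neg, norm_mul]
    congr 1
    · simp
    · rw [norm_mul, norm_mul, Complex.norm_I, Complex.norm_two, mul_one, Complex.norm_real, Real.norm_eq_abs,
        abs_of_pos Real.pi_pos]
  rcases eq_or_ne n 0 with h0 | h0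
  · rw [h0] at habs
    simp at habs
    have := hu.1
    rw [habs] at this
    norm_num at this
  · have h1 : (1:ℝ) ≤ |(n:ℝ)| := by
      rw [show |(n:ℝ)| = ((|n| : ℤ) : ℝ) by push_cast; simp]
      exact_mod_cast Int.one_le_abs h0
    have h2 : 2 * Real.pi ≤ ‖u‖ := by
      rw [habs]
      nlinarith [Real.pi_pos]
    have := hu.2.1
    nlinarith [Real.pi_gt_three]

noncomputable def Phi (γ : ℝ) (u : ℂ) : ℝ :=
  ‖(gsym (Complex.exp (-u)))‖ ^ (3 - γ)
    * ‖(rho2 (Complex.exp (-u)) / 2)‖ + ‖u‖ ^ (-γ)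

lemma Phi_contOn (γ : ℝ) (hγ1 : γ < 1) : ContinuousOn (Phi γ) Kset := by
  have cg : Continuous fun u : ℂ => gsym (Complex.exp (-u)) := by
    unfold gsym
    fun_prop
  have habs_g : ContinuousOn (fun u : ℂ => ‖(gsym (Complex.exp (-u)))‖) Kset :=
    (continuous_norm.comp cg).continuousOn
  have h1 : ContinuousOn (fun u : ℂ =>
      ‖(gsym (Complex.exp (-u)))‖ ^ (3 - γ)) Kset :=
    habs_g.rpow_const (fun u _ => Or.inr (by linarith))
  have h2 : ContinuousOn (fun u : ℂ => ‖(rho2 (Complex.exp (-u)) / 2)‖) Kset := by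
    refine continuous_norm.comp_continuousOn ?_
    refine ContinuousOn.div_const ?_ 2
    unfold rho2
    refine ContinuousOn.div ?_ ?_ ?_
    · fun_prop
    · fun_prop
    · intro u hu
      exact pow_ne_zero 3 (Kset_exp_ne_one hu)
  have h3 : ContinuousOn (fun u : ℂ => ‖u‖ ^ (-γ)) Kset := by
    refine ContinuousOn.rpow_const continuous_norm.continuousOn ?_
    intro u hu
    exact Or.inl (by
      have := hu.1
      positivity)
  exact (h1.mul h2).add h3

lemma abs_cpow_real_exp {x : ℂ} (r : ℝ) (hr : r ≠ 0) :
    ‖(x ^ ((r : ℝ) : ℂ))‖ = ‖x‖ ^ r := by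
  rcases eq_or_ne x 0 with rfl | hx
  · rw [Complex.zero_cpow (by simpa using hr), norm_zero, Real.zero_rpow hr]
  · rw [Complex.norm_cpow_of_ne_zero hx]
    simp

lemma pointwise_far {γ : ℝ} (hγ0 : 0 < γ) (hγ1 : γ < 1) {u : ℂ} (hu : u ∈ Kset) :
    ‖(gsym (Complex.exp (-u)) ^ (((3 - γ : ℝ)) : ℂ) * (rho2 (Complex.exp (-u)) / 2)
      - u ^ (-(γ : ℂ)))‖ ≤ Phi γ u := by
  have hu0 : u ≠ 0 := Kset_ne_zero hu
  have htri : ∀ X Y : ℂ, ‖(X - Y)‖ ≤ ‖X‖ + ‖Y‖ := by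
    intro X Y
    calc ‖(X - Y)‖ = ‖(X + -Y)‖ := by rw [sub_eq_add_neg]
      _ ≤ ‖X‖ + ‖(-Y)‖ := norm_add_le _ _
      _ = ‖X‖ + ‖Y‖ := by rw [norm_neg]
  refine le_trans (htri _ _) ?_
  unfold Phi
  have e1 : ‖(gsym (Complex.exp (-u)) ^ (((3 - γ : ℝ)) : ℂ))‖
      = ‖(gsym (Complex.exp (-u)))‖ ^ (3 - γ) :=
    abs_cpow_real_exp (3 - γ) (by linarith)
  have e2 : ‖(u ^ (-(γ : ℂ)))‖ = ‖u‖ ^ (-γ) := by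
    rw [show (-(γ:ℂ)) = (((-γ : ℝ)):ℂ) by push_cast; ring]
    exact abs_cpow_real_exp (-γ) (by linarith)
  rw [norm_mul, e1, e2]

lemma sin_lb {θ : ℝ} (hθ1 : Real.pi/2 < θ) (hθ2 : θ < 7*Real.pi/12) :
    (7:ℝ)/10 ≤ Real.sin θ := by
  have hpi := Real.pi_pos
  have hs : Real.sin θ = Real.cos (θ - Real.pi/2) := by
    rw [show θ - Real.pi/2 = -(Real.pi/2 - θ) by ring, Real.cos_neg, Real.cos_pi_div_two_sub]
  have hcos : Real.cos (Real.pi/4) ≤ Real.cos (θ - Real.pi/2) :=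
    Real.cos_le_cos_of_nonneg_of_le_pi (by linarith) (by linarith) (by linarith)
  rw [Real.cos_pi_div_four] at hcos
  have h2 : (0:ℝ) ≤ Real.sqrt 2 := Real.sqrt_nonneg 2
  have h2' : Real.sqrt 2 ^ 2 = 2 := Real.sq_sqrt (by norm_num)
  rw [hs]
  nlinarith

lemma Dset_geom {θ : ℝ} (hθ1 : Real.pi/2 < θ) (hθ2 : θ < 7*Real.pi/12) {w : ℂ}
    (hw : w ∈ Dset 1 θ) : |w.arg| ≤ θ ∧ ‖w‖ ≤ 6 := by
  have hpi := Real.pi_pos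
  obtain ⟨hw0, hcase⟩ := hw
  rcases hcase with ⟨he, him⟩ | ⟨habs, harg⟩
  · refine ⟨he.le, ?_⟩
    have him' : |w.im| ≤ Real.pi := by
      simpa using him
    have hsin := sin_lb hθ1 hθ2
    have hkey : ‖w‖ * Real.sin θ = |w.im| := by
      have h1 := Complex.norm_mul_sin_arg w
      have h2 : |Real.sin w.arg| = Real.sin θ := by
        rcases (abs_eq (by linarith : (0:ℝ) ≤ θ)).mp he with h | h
        · rw [h, _root_.abs_of_nonneg (by linarith : (0:ℝ) ≤ Real.sin θ)]
        · rw [h, Real.sin_neg, abs_neg, _root_.abs_of_nonneg (by linarith : (0:ℝ) ≤ Real.sin θ)]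
      calc ‖w‖ * Real.sin θ = ‖w‖ * |Real.sin w.arg| := by rw [h2]
        _ = |‖w‖ * Real.sin w.arg| := by
            rw [abs_mul, _root_.abs_of_nonneg (norm_nonneg w)]
        _ = |w.im| := by rw [h1]
    have h4 := Real.pi_le_four
    nlinarith [norm_nonneg w]
  · exact ⟨harg, by
      have : ‖w‖ ≤ 1 := by simpa using habs
      linarith⟩

lemma Dset_mem_Kset {θ : ℝ} (hθ1 : Real.pi/2 < θ) (hθ2 : θ < 7*Real.pi/12) {w : ℂ}
    (hw : w ∈ Dset 1 θ) (hfar : 1/10 ≤ ‖w‖) : w ∈ Kset := by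
  have hpi := Real.pi_pos
  obtain ⟨harg, habs⟩ := Dset_geom hθ1 hθ2 hw
  refine ⟨hfar, habs, ?_⟩
  have h1 := Complex.norm_mul_cos_arg w
  have h2 : Real.cos (7 * Real.pi / 12) ≤ Real.cos w.arg := by
    have h3 : Real.cos (7 * Real.pi / 12) ≤ Real.cos |w.arg| :=
      Real.cos_le_cos_of_nonneg_of_le_pi (abs_nonneg _) (by linarith) (by linarith)
    rwa [Real.cos_abs] at h3
  calc ‖w‖ * Real.cos (7 * Real.pi / 12) ≤ ‖w‖ * Real.cos w.arg := by
        exact mul_le_mul_of_nonneg_left h2 (norm_nonneg w)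
    _ = w.re := h1

/-- Core estimate on the scaled region `D(1,θ)`. -/
lemma core_bound {γ : ℝ} (hγ0 : 0 < γ) (hγ1 : γ < 1) {θ : ℝ} (hθ1 : Real.pi/2 < θ)
    (hθ2 : θ < 7*Real.pi/12) :
    ∃ c > (0:ℝ), ∀ w ∈ Dset 1 θ,
      ‖(gsym (Complex.exp (-w)) ^ (((3 - γ : ℝ)) : ℂ)
        * (rho2 (Complex.exp (-w)) / 2) - w ^ (-(γ : ℂ)))‖ ≤ c * ‖w‖ ^ (3 - γ) := by
  obtain ⟨C, hC⟩ := Kset_compact.exists_bound_of_continuousOn (Phi_contOn γ hγ1)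
  set c2 : ℝ := max C 0 / ((1/10 : ℝ) ^ (3 - γ)) with hc2
  have hc2nn : 0 ≤ c2 := by
    apply div_nonneg (le_max_right C 0)
    positivity
  refine ⟨20000 + c2, by positivity, ?_⟩
  intro w hw
  have hw0 : w ≠ 0 := hw.1
  have habsw : 0 < ‖w‖ := norm_pos_iff.mpr hw0
  obtain ⟨harg, habs6⟩ := Dset_geom hθ1 hθ2 hw
  have hrnn : 0 ≤ ‖w‖ ^ (3 - γ) := Real.rpow_nonneg habsw.le _
  rcases le_or_gt (‖w‖) (1/10) with hnear | hfar
  · have h := near_bound hγ0 hγ1 (by linarith : θ ≤ 7 * Real.pi / 12) hw0 hnear harg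
    have : c2 * ‖w‖ ^ (3 - γ) ≥ 0 := mul_nonneg hc2nn hrnn
    calc ‖_‖ ≤ 20000 * ‖w‖ ^ (3 - γ) := h
      _ ≤ (20000 + c2) * ‖w‖ ^ (3 - γ) := by nlinarith
  · have hK : w ∈ Kset := Dset_mem_Kset hθ1 hθ2 hw hfar.le
    have hp := pointwise_far hγ0 hγ1 hK
    have hPhi : Phi γ w ≤ max C 0 := le_trans (le_abs_self _) (le_max_of_le_left (by
      have := hC w hK
      calc |Phi γ w| = ‖Phi γ w‖ := rfl
        _ ≤ C := this))
    have hr10 : ((1:ℝ)/10) ^ (3 - γ) ≤ ‖w‖ ^ (3 - γ) :=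
      Real.rpow_le_rpow (by norm_num) hfar.le (by linarith)
    have hCle : max C 0 ≤ c2 * ‖w‖ ^ (3 - γ) := by
      rw [hc2, div_mul_eq_mul_div, le_div_iff₀ (by positivity)]
      calc max C 0 * (1/10 : ℝ) ^ (3 - γ) ≤ max C 0 * ‖w‖ ^ (3 - γ) := by
            exact mul_le_mul_of_nonneg_left hr10 (le_max_right C 0)
        _ = max C 0 * ‖w‖ ^ (3 - γ) := rfl
    calc ‖_‖ ≤ Phi γ w := hp
      _ ≤ max C 0 := hPhi
      _ ≤ c2 * ‖w‖ ^ (3 - γ) := hCle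
      _ ≤ (20000 + c2) * ‖w‖ ^ (3 - γ) := by nlinarith

lemma ofReal_mul_cpow' {r : ℝ} (hr : 0 < r) (x : ℂ) {s : ℂ} (hs : s ≠ 0) :
    ((r:ℂ) * x) ^ s = (r:ℂ) ^ s * x ^ s := by
  have hr0 : (r:ℂ) ≠ 0 := Complex.ofReal_ne_zero.mpr hr.ne'
  rcases eq_or_ne x 0 with rfl | hx
  · rw [mul_zero, Complex.zero_cpow hs, mul_zero]
  rw [Complex.cpow_def_of_ne_zero (mul_ne_zero hr0 hx), Complex.log_ofReal_mul hr hx, add_mul,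
    Complex.exp_add, Complex.ofReal_log hr.le, ← Complex.cpow_def_of_ne_zero hr0,
    ← Complex.cpow_def_of_ne_zero hx]

lemma Dset_scale {τ θ : ℝ} (hτ : 0 < τ) {z : ℂ} (hz : z ∈ Dset τ θ) :
    z * (τ:ℂ) ∈ Dset 1 θ := by
  obtain ⟨hz0, hcase⟩ := hz
  have hτ0 : (τ:ℂ) ≠ 0 := Complex.ofReal_ne_zero.mpr hτ.ne'
  refine ⟨mul_ne_zero hz0 hτ0, ?_⟩
  have harg : (z * (τ:ℂ)).arg = z.arg := by rw [mul_comm]; exact Complex.arg_real_mul z hτ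
  have him : (z * (τ:ℂ)).im = z.im * τ := by
    simp [Complex.mul_im]
  have habs : ‖(z * (τ:ℂ))‖ = ‖z‖ * τ := by
    rw [norm_mul, Complex.norm_real, Real.norm_eq_abs, _root_.abs_of_pos hτ]
  rcases hcase with ⟨he, hi⟩ | ⟨ha, he⟩
  · left
    refine ⟨by rw [harg]; exact he, ?_⟩
    rw [him, abs_mul, _root_.abs_of_pos hτ, div_one]
    calc |z.im| * τ ≤ (Real.pi / τ) * τ := mul_le_mul_of_nonneg_right hi hτ.le
      _ = Real.pi := by field_simp
  · right
    refine ⟨?_, by rw [harg]; exact he⟩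
    rw [habs]
    calc ‖z‖ * τ ≤ (1/τ) * τ := mul_le_mul_of_nonneg_right ha hτ.le
      _ = 1/1 := by field_simp

theorem bdf3_rho2_fractional_consistency (γ : ℝ) (hγ : γ ∈ Ioo (0 : ℝ) 1) :
    ∃ θ₀ ∈ Ioo (Real.pi / 2) Real.pi, ∀ θ ∈ Ioo (Real.pi / 2) θ₀,
      ∃ c > (0 : ℝ),
        ∀ τ : ℝ, 0 < τ → ∀ z ∈ Dset τ θ,
          ‖((bdf3 τ (Complex.exp (-z * τ))) ^ (((3 - γ : ℝ)) : ℂ) *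
              (rho2 (Complex.exp (-z * τ)) / 2) * (τ : ℂ) ^ 3 - z ^ (-(γ : ℂ)))‖ ≤
            c * τ ^ 3 * ‖z‖ ^ (3 - γ) := by
  obtain ⟨hγ0, hγ1⟩ := hγ
  have hpi := Real.pi_pos
  refine ⟨7 * Real.pi / 12, ⟨by linarith, by linarith⟩, ?_⟩
  intro θ hθ
  obtain ⟨hθ1, hθ2⟩ := hθ
  obtain ⟨c, hc0, hc⟩ := core_bound hγ0 hγ1 hθ1 hθ2
  refine ⟨c, hc0, ?_⟩
  intro τ hτ z hz
  set s : ℂ := (((3 - γ : ℝ)) : ℂ) with hs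
  have hs0 : s ≠ 0 := by
    rw [hs]
    simp only [ne_eq, Complex.ofReal_eq_zero]
    intro h; linarith
  have hsneg : (-(γ:ℂ)) ≠ 0 := by
    simp only [ne_eq, neg_eq_zero, Complex.ofReal_eq_zero]
    intro h; linarith
  set w : ℂ := z * (τ:ℂ) with hw
  have hz0 : z ≠ 0 := hz.1
  have hτ0 : (τ:ℂ) ≠ 0 := Complex.ofReal_ne_zero.mpr hτ.ne'
  have hw0 : w ≠ 0 := mul_ne_zero hz0 hτ0
  have hwD : w ∈ Dset 1 θ := Dset_scale hτ hz
  have hξ : Complex.exp (-z * (τ:ℂ)) = Complex.exp (-w) := by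
    rw [hw]; ring_nf
  set ξ : ℂ := Complex.exp (-w) with hξdef
  -- split the bdf3 power
  have hbdf : bdf3 τ ξ = ((τ⁻¹ : ℝ):ℂ) * gsym ξ := by
    unfold bdf3 gsym
    push_cast
    ring
  have hstep1 : bdf3 τ ξ ^ s = ((τ⁻¹ : ℝ):ℂ) ^ s * gsym ξ ^ s := by
    rw [hbdf]
    exact ofReal_mul_cpow' (by positivity) _ hs0
  have hstep2 : ((τ⁻¹ : ℝ):ℂ) ^ s = (((τ⁻¹ ^ (3 - γ) : ℝ)):ℂ) := by
    rw [hs, ← Complex.ofReal_cpow (by positivity) (3 - γ)]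
  -- split z ^ (-γ)
  have hz_eq : z = ((τ⁻¹ : ℝ):ℂ) * w := by
    rw [hw]
    push_cast
    field_simp
  have hstep3 : z ^ (-(γ:ℂ)) = (((τ⁻¹ ^ (-γ) : ℝ)):ℂ) * w ^ (-(γ:ℂ)) := by
    rw [hz_eq, ofReal_mul_cpow' (by positivity) w hsneg]
    congr 1
    rw [show (-(γ:ℂ)) = (((-γ : ℝ)):ℂ) by push_cast; ring,
      ← Complex.ofReal_cpow (by positivity) (-γ)]
  -- scalar identities
  have hX : (τ⁻¹ ^ (3 - γ) : ℝ) * τ ^ (3:ℕ) = τ ^ (γ - 3) * τ ^ (3:ℕ) := by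
    rw [Real.inv_rpow hτ.le, ← Real.rpow_neg hτ.le]
    norm_num
  have hX2 : (τ ^ (γ - 3) : ℝ) * τ ^ (3:ℕ) = τ ^ γ := by
    rw [show ((τ:ℝ) ^ (3:ℕ)) = τ ^ ((3:ℕ):ℝ) by rw [Real.rpow_natCast], ← Real.rpow_add hτ]
    norm_num
  have hY : (τ⁻¹ ^ (-γ) : ℝ) = τ ^ γ := by
    rw [Real.inv_rpow hτ.le, ← Real.rpow_neg hτ.le, neg_neg]
  -- main algebraic reduction
  have key : bdf3 τ ξ ^ s * (rho2 ξ / 2) * (τ:ℂ) ^ 3 - z ^ (-(γ:ℂ))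
      = (((τ ^ γ : ℝ)):ℂ) * (gsym ξ ^ s * (rho2 ξ / 2) - w ^ (-(γ:ℂ))) := by
    rw [hstep1, hstep2, hstep3, hY]
    have h1 : (((τ⁻¹ ^ (3 - γ) : ℝ)):ℂ) * (τ:ℂ) ^ (3:ℕ) = (((τ ^ γ : ℝ)):ℂ) := by
      rw [show ((τ:ℂ) ^ (3:ℕ)) = (((τ ^ (3:ℕ) : ℝ)):ℂ) by push_cast; ring,
        ← Complex.ofReal_mul]
      rw [show (τ⁻¹ ^ (3 - γ) : ℝ) * τ ^ (3:ℕ) = τ ^ γ by rw [hX]; exact hX2]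
    calc (((τ⁻¹ ^ (3 - γ) : ℝ)):ℂ) * gsym ξ ^ s * (rho2 ξ / 2) * (τ:ℂ) ^ 3
          - (((τ ^ γ : ℝ)):ℂ) * w ^ (-(γ:ℂ))
        = ((((τ⁻¹ ^ (3 - γ) : ℝ)):ℂ) * (τ:ℂ) ^ (3:ℕ)) * (gsym ξ ^ s * (rho2 ξ / 2))
          - (((τ ^ γ : ℝ)):ℂ) * w ^ (-(γ:ℂ)) := by ring
      _ = (((τ ^ γ : ℝ)):ℂ) * (gsym ξ ^ s * (rho2 ξ / 2) - w ^ (-(γ:ℂ))) := by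
          rw [h1]; ring
  rw [hξ, key, norm_mul, Complex.norm_real, Real.norm_eq_abs,
    _root_.abs_of_nonneg (Real.rpow_nonneg hτ.le γ)]
  have hcore := hc w hwD
  rw [← hξdef] at hcore
  have habsw : ‖w‖ = ‖z‖ * τ := by
    rw [hw, norm_mul, Complex.norm_real, Real.norm_eq_abs, _root_.abs_of_pos hτ]
  have hfin : τ ^ γ * (c * ‖w‖ ^ (3 - γ)) = c * τ ^ 3 * ‖z‖ ^ (3 - γ) := by
    rw [habsw, Real.mul_rpow (norm_nonneg z) hτ.le]
    have hT : (τ:ℝ) ^ γ * τ ^ (3 - γ) = τ ^ (3:ℕ) := by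
      rw [← Real.rpow_add hτ, show γ + (3 - γ) = ((3:ℕ):ℝ) by push_cast; ring,
        Real.rpow_natCast]
    calc τ ^ γ * (c * (‖z‖ ^ (3 - γ) * τ ^ (3 - γ)))
        = c * (τ ^ γ * τ ^ (3 - γ)) * ‖z‖ ^ (3 - γ) := by ring
      _ = c * τ ^ (3:ℕ) * ‖z‖ ^ (3 - γ) := by rw [hT]
  calc τ ^ γ * ‖(gsym ξ ^ s * (rho2 ξ / 2) - w ^ (-(γ:ℂ)))‖
      ≤ τ ^ γ * (c * ‖w‖ ^ (3 - γ)) := by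
        exact mul_le_mul_of_nonneg_left hcore (Real.rpow_nonneg hτ.le γ)
    _ = c * τ ^ 3 * ‖z‖ ^ (3 - γ) := hfin
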